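/- Shearer's inequality via the chain rule: Let (Ω, F, P) = ⊗_{i=1}^n (Ω_i, F_i, P_i) be a product probability space with coordinate maps Z_1,…,Z_n. For A ⊆ [n] let E_A[f] := E[f | Z_j, j ∈ Aᶜ] and Ent_A(f) := E_A[f log f] − E_A[f] log E_A[f]. Then for any nonnegative weights (θ_A)_{A⊆[n]} summing to 1 and any f ∈ L log L, θ⋆ · Ent(f) ≤ ∑_{A⊆[n]} θ_A E[Ent_A(f)], where θ⋆ := min_{1≤i≤n} ∑_{A ∋ i} θ_A. -/

import Mathlib

open MeasureTheory ProbabilityTheory Function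
open scoped BigOperators

set_option linter.unusedSectionVars false

/-- The entropy functional `Ent(g) = E[g log g] - E[g] log E[g]`. -/
noncomputable def ent {Ω : Type*} [MeasurableSpace Ω] (P : Measure Ω) (g : Ω → ℝ) : ℝ :=
  (∫ x, g x * Real.log (g x) ∂P) - (∫ x, g x ∂P) * Real.log (∫ x, g x ∂P)

/-- The sub-σ-algebra of a product space generated by the coordinates outside `A`. -/
def coordSigma {n : ℕ} (Ω : Fin n → Type*) [∀ i, MeasurableSpace (Ω i)]
    (A : Finset (Fin n)) : MeasurableSpace (∀ i, Ω i) :=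
  ⨆ i ∈ ((Finset.univ : Finset (Fin n)) \ A),
    MeasurableSpace.comap (fun x => x i) inferInstance

/-- The conditional entropy `Ent_A(f) = E_A[f log f] - E_A[f] log E_A[f]`, where
`E_A = E[· | Z_j, j ∈ Aᶜ]`. -/
noncomputable def condEnt {n : ℕ} {Ω : Fin n → Type*} [∀ i, MeasurableSpace (Ω i)]
    (μ : Measure (∀ i, Ω i)) (A : Finset (Fin n)) (f : (∀ i, Ω i) → ℝ)
    (x : ∀ i, Ω i) : ℝ :=
  (MeasureTheory.condExp (coordSigma Ω A) μ (fun y => f y * Real.log (f y))) x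
    - (MeasureTheory.condExp (coordSigma Ω A) μ f) x
        * Real.log ((MeasureTheory.condExp (coordSigma Ω A) μ f) x)

noncomputable section

namespace ShearerProof

variable {n : ℕ} {Ω : Fin n → Type*} [∀ i, MeasurableSpace (Ω i)]

def eqB (Ω : Fin n → Type*) [∀ i, MeasurableSpace (Ω i)] (B : Finset (Fin n)) :
    (∀ i, Ω i) ≃ᵐ (∀ j : {j // j ∈ B}, Ω j) × (∀ j : {j // ¬ j ∈ B}, Ω j) :=
  MeasurableEquiv.piEquivPiSubtypeProd Ω (· ∈ B)

lemma eqB_symm_apply (B : Finset (Fin n)) (y : ∀ j : {j // j ∈ B}, Ω j)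
    (x : ∀ i, Ω i) :
    (eqB Ω B).symm (y, (eqB Ω B x).2) = Function.updateFinset x B y := by
  ext j
  by_cases h : j ∈ B <;>
    simp [eqB, MeasurableEquiv.piEquivPiSubtypeProd, Equiv.piEquivPiSubtypeProd,
      Function.updateFinset, h]

lemma updateFinset_updateFinset_same {B : Finset (Fin n)} (x : ∀ i, Ω i)
    (y z : ∀ j : {j // j ∈ B}, Ω j) :
    Function.updateFinset (Function.updateFinset x B y) B z
      = Function.updateFinset x B z := by
  ext j
  by_cases h : j ∈ B <;> simp [Function.updateFinset, h]

lemma measurable_updateFinset_jointly {B : Finset (Fin n)} :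
    Measurable (fun q : (∀ i, Ω i) × (∀ j : {j // j ∈ B}, Ω j) =>
      Function.updateFinset q.1 B q.2) := by
  rw [measurable_pi_iff]
  intro j
  simp only [Function.updateFinset]
  by_cases h : j ∈ B
  · simp only [h, dif_pos]
    exact (measurable_pi_apply _).comp measurable_snd
  · simp only [h, dif_neg, not_false_iff]
    exact (measurable_pi_apply _).comp measurable_fst

variable (P : ∀ i, Measure (Ω i)) [∀ i, IsProbabilityMeasure (P i)]

def marg (B : Finset (Fin n)) (k : (∀ i, Ω i) → ℝ) (x : ∀ i, Ω i) : ℝ :=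
  ∫ y, k (Function.updateFinset x B y) ∂(Measure.pi fun j : {j // j ∈ B} => P j)

lemma pi_inst_irrel {ι : Type*} {α : ι → Type*} [∀ i, MeasurableSpace (α i)]
    (i1 i2 : Fintype ι) (μ : ∀ i, Measure (α i)) :
    @Measure.pi ι α i1 _ μ = @Measure.pi ι α i2 _ μ := by
  rw [Subsingleton.elim i1 i2]

lemma mpB (B : Finset (Fin n)) :
    MeasurePreserving (eqB Ω B) (Measure.pi P)
      ((Measure.pi fun j : {j // j ∈ B} => P j).prod
        (Measure.pi fun j : {j // ¬ j ∈ B} => P j)) := by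
  have h := measurePreserving_piEquivPiSubtypeProd P (· ∈ B)
  exact ⟨(eqB Ω B).measurable, h.map_eq.trans (by congr 1 <;> exact pi_inst_irrel _ _ _)⟩

lemma mpSnd (B : Finset (Fin n)) :
    MeasurePreserving (fun x => (eqB Ω B x).2) (Measure.pi P)
      (Measure.pi fun j : {j // ¬ j ∈ B} => P j) := by
  refine ⟨measurable_snd.comp (eqB Ω B).measurable, ?_⟩
  have hc : (fun x => ((eqB Ω B) x).2) = Prod.snd ∘ (eqB Ω B) := rfl
  rw [hc, ← Measure.map_map measurable_snd (eqB Ω B).measurable, (mpB P B).map_eq,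
    Measure.map_snd_prod, measure_univ, one_smul]

lemma marg_eq (B : Finset (Fin n)) (k : (∀ i, Ω i) → ℝ) (x : ∀ i, Ω i) :
    marg P B k x
      = ∫ y, k ((eqB Ω B).symm (y, (eqB Ω B x).2))
          ∂(Measure.pi fun j : {j // j ∈ B} => P j) := by
  simp only [eqB_symm_apply]
  rfl

lemma ae_snd (B : Finset (Fin n)) {Q : (∀ j : {j // ¬ j ∈ B}, Ω j) → Prop}
    (hQ : ∀ᵐ w ∂(Measure.pi fun j : {j // ¬ j ∈ B} => P j), Q w) :
    ∀ᵐ x ∂(Measure.pi P), Q ((eqB Ω B x).2) :=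
  (mpSnd P B).quasiMeasurePreserving.tendsto_ae.eventually hQ

/-- Master a.e. localization: an a.e. property holds along a.e. fiber. -/
lemma ae_fiber (B : Finset (Fin n)) {p : (∀ i, Ω i) → Prop}
    (hp : ∀ᵐ z ∂(Measure.pi P), p z) :
    ∀ᵐ x ∂(Measure.pi P),
      ∀ᵐ y ∂(Measure.pi fun j : {j // j ∈ B} => P j),
        p (Function.updateFinset x B y) := by
  have h1 : ∀ᵐ z ∂((Measure.pi fun j : {j // j ∈ B} => P j).prod
      (Measure.pi fun j : {j // ¬ j ∈ B} => P j)), p ((eqB Ω B).symm z) :=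
    ((mpB P B).symm (eqB Ω B)).quasiMeasurePreserving.tendsto_ae.eventually hp
  have h2 : ∀ᵐ z ∂((Measure.pi fun j : {j // ¬ j ∈ B} => P j).prod
      (Measure.pi fun j : {j // j ∈ B} => P j)), p ((eqB Ω B).symm (z.2, z.1)) :=
    Measure.measurePreserving_swap.quasiMeasurePreserving.tendsto_ae.eventually h1
  have h3 := Measure.ae_ae_of_ae_prod h2
  filter_upwards [ae_snd P B h3] with x hx
  filter_upwards [hx] with y hy
  rwa [eqB_symm_apply] at hy

lemma fiber_integrable (B : Finset (Fin n)) {k : (∀ i, Ω i) → ℝ}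
    (hk : Integrable k (Measure.pi P)) :
    ∀ᵐ x ∂(Measure.pi P),
      Integrable (fun y => k (Function.updateFinset x B y))
        (Measure.pi fun j : {j // j ∈ B} => P j) := by
  have hc : Integrable (k ∘ (eqB Ω B).symm)
      ((Measure.pi fun j : {j // j ∈ B} => P j).prod
        (Measure.pi fun j : {j // ¬ j ∈ B} => P j)) :=
    (((mpB P B).symm (eqB Ω B)).integrable_comp hk.aestronglyMeasurable).mpr hk
  have h2 := hc.prod_left_ae
  filter_upwards [ae_snd P B h2] with x hx
  have : (fun y => (k ∘ (eqB Ω B).symm) (y, (eqB Ω B x).2))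
      = fun y => k (Function.updateFinset x B y) := by
    funext y; simp only [Function.comp_apply, eqB_symm_apply]
  rwa [this] at hx

lemma integrable_marg (B : Finset (Fin n)) {k : (∀ i, Ω i) → ℝ}
    (hk : Integrable k (Measure.pi P)) :
    Integrable (marg P B k) (Measure.pi P) := by
  have hc : Integrable (k ∘ (eqB Ω B).symm)
      ((Measure.pi fun j : {j // j ∈ B} => P j).prod
        (Measure.pi fun j : {j // ¬ j ∈ B} => P j)) :=
    (((mpB P B).symm (eqB Ω B)).integrable_comp hk.aestronglyMeasurable).mpr hk
  have hM : Integrable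
      (fun w => ∫ y, (k ∘ (eqB Ω B).symm) (y, w)
        ∂(Measure.pi fun j : {j // j ∈ B} => P j))
      (Measure.pi fun j : {j // ¬ j ∈ B} => P j) := hc.integral_prod_right
  have heq : marg P B k = (fun w => ∫ y, (k ∘ (eqB Ω B).symm) (y, w)
      ∂(Measure.pi fun j : {j // j ∈ B} => P j)) ∘ (fun x => (eqB Ω B x).2) := by
    funext x; exact marg_eq P B k x
  rw [heq]
  exact ((mpSnd P B).integrable_comp hM.aestronglyMeasurable).mpr hM

lemma integral_marg (B : Finset (Fin n)) {k : (∀ i, Ω i) → ℝ}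
    (hk : Integrable k (Measure.pi P)) :
    ∫ x, marg P B k x ∂(Measure.pi P) = ∫ x, k x ∂(Measure.pi P) := by
  have hc : Integrable (k ∘ (eqB Ω B).symm)
      ((Measure.pi fun j : {j // j ∈ B} => P j).prod
        (Measure.pi fun j : {j // ¬ j ∈ B} => P j)) :=
    (((mpB P B).symm (eqB Ω B)).integrable_comp hk.aestronglyMeasurable).mpr hk
  have hM : Integrable
      (fun w => ∫ y, (k ∘ (eqB Ω B).symm) (y, w)
        ∂(Measure.pi fun j : {j // j ∈ B} => P j))
      (Measure.pi fun j : {j // ¬ j ∈ B} => P j) := hc.integral_prod_right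
  have heq : marg P B k = (fun w => ∫ y, (k ∘ (eqB Ω B).symm) (y, w)
      ∂(Measure.pi fun j : {j // j ∈ B} => P j)) ∘ (fun x => (eqB Ω B x).2) := by
    funext x; exact marg_eq P B k x
  rw [heq]
  have h2 : ∫ x, ((fun w => ∫ y, (k ∘ (eqB Ω B).symm) (y, w)
      ∂(Measure.pi fun j : {j // j ∈ B} => P j)) ∘ (fun x => (eqB Ω B x).2)) x
        ∂(Measure.pi P)
      = ∫ w, (∫ y, (k ∘ (eqB Ω B).symm) (y, w)
        ∂(Measure.pi fun j : {j // j ∈ B} => P j))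
          ∂(Measure.pi fun j : {j // ¬ j ∈ B} => P j) := by
    rw [← (mpSnd P B).map_eq]
    exact (integral_map (mpSnd P B).measurable.aemeasurable
      (by rw [(mpSnd P B).map_eq]; exact hM.aestronglyMeasurable)).symm
  rw [h2, ← integral_prod_symm _ hc]
  exact ((mpB P B).symm (eqB Ω B)).integral_comp
    (eqB Ω B).symm.measurableEmbedding k

lemma nonempty_of_prob {α : Type*} [MeasurableSpace α] (μ : Measure α)
    [IsProbabilityMeasure μ] : Nonempty α := by
  by_contra h
  rw [not_nonempty_iff] at h
  have h1 : (Set.univ : Set α) = ∅ := Set.univ_eq_empty_iff.mpr h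
  have h2 := measure_univ (μ := μ)
  rw [h1, measure_empty] at h2
  exact zero_ne_one h2

lemma marg_congr_ae (B : Finset (Fin n)) {k k' : (∀ i, Ω i) → ℝ}
    (h : k =ᵐ[Measure.pi P] k') : marg P B k =ᵐ[Measure.pi P] marg P B k' := by
  filter_upwards [ae_fiber P B h] with x hx
  exact integral_congr_ae hx

/-- Converse integrability: if `ψ` does not depend on the `B`-coordinates and
`κ` is integrable, and the marginal of `|ψ * κ|` is integrable, then `ψ * κ` is
integrable. -/
lemma integrable_of_marg (B : Finset (Fin n)) {κ ψ : (∀ i, Ω i) → ℝ}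
    (hκ : Integrable κ (Measure.pi P)) (hκm : Measurable κ) (hψm : Measurable ψ)
    (hψ : ∀ x y, ψ (Function.updateFinset x B y) = ψ x)
    (h2 : Integrable (marg P B (fun z => |ψ z * κ z|)) (Measure.pi P)) :
    Integrable (fun z => ψ z * κ z) (Measure.pi P) := by
  set k : (∀ i, Ω i) → ℝ := fun z => ψ z * κ z with hk
  have hkm : Measurable k := hψm.mul hκm
  have hkaesm : AEStronglyMeasurable (k ∘ (eqB Ω B).symm)
      ((Measure.pi fun j : {j // j ∈ B} => P j).prod
        (Measure.pi fun j : {j // ¬ j ∈ B} => P j)) :=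
    (hkm.comp (eqB Ω B).symm.measurable).aestronglyMeasurable
  haveI : ∀ i : Fin n, Nonempty (Ω i) := fun i => nonempty_of_prob (P i)
  have hcκ : Integrable (κ ∘ (eqB Ω B).symm)
      ((Measure.pi fun j : {j // j ∈ B} => P j).prod
        (Measure.pi fun j : {j // ¬ j ∈ B} => P j)) :=
    (((mpB P B).symm (eqB Ω B)).integrable_comp hκ.aestronglyMeasurable).mpr hκ
  have hψconst : ∀ (w : ∀ j : {j // ¬ j ∈ B}, Ω j) (y y' : ∀ j : {j // j ∈ B}, Ω j),
      ψ ((eqB Ω B).symm (y, w)) = ψ ((eqB Ω B).symm (y', w)) := by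
    intro w y y'
    rw [show ((eqB Ω B).symm (y, w)) = Function.updateFinset ((eqB Ω B).symm (y', w)) B y from ?_,
      hψ]
    ext j
    by_cases h : j ∈ B <;>
      simp [eqB, MeasurableEquiv.piEquivPiSubtypeProd, Equiv.piEquivPiSubtypeProd,
        Function.updateFinset, h]
  have hii : ∀ᵐ w ∂(Measure.pi fun j : {j // ¬ j ∈ B} => P j),
      Integrable (fun y => (k ∘ (eqB Ω B).symm) (y, w))
        (Measure.pi fun j : {j // j ∈ B} => P j) := by
    filter_upwards [hcκ.prod_left_ae] with w hw
    set y₀ : ∀ j : {j // j ∈ B}, Ω j := Classical.arbitrary _ with hy₀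
    have : (fun y => (k ∘ (eqB Ω B).symm) (y, w))
        = fun y => ψ ((eqB Ω B).symm (y₀, w)) * (κ ∘ (eqB Ω B).symm) (y, w) := by
      funext y
      simp only [Function.comp_apply, hk]
      rw [hψconst w y y₀]
    rw [this]
    exact hw.const_mul _
  have hMabs : Integrable
      (fun w => ∫ y, ‖(k ∘ (eqB Ω B).symm) (y, w)‖
        ∂(Measure.pi fun j : {j // j ∈ B} => P j))
      (Measure.pi fun j : {j // ¬ j ∈ B} => P j) := by
    have habs : marg P B (fun z => |ψ z * κ z|)
        = (fun w => ∫ y, ‖(k ∘ (eqB Ω B).symm) (y, w)‖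
            ∂(Measure.pi fun j : {j // j ∈ B} => P j)) ∘ (fun x => (eqB Ω B x).2) := by
      funext x
      rw [marg_eq]
      simp only [Function.comp_apply, Real.norm_eq_abs]
      rfl
    have hm : AEStronglyMeasurable
        (fun w => ∫ y, ‖(k ∘ (eqB Ω B).symm) (y, w)‖
          ∂(Measure.pi fun j : {j // j ∈ B} => P j))
        (Measure.pi fun j : {j // ¬ j ∈ B} => P j) := by
      have : StronglyMeasurable fun q : (∀ j : {j // j ∈ B}, Ω j) × (∀ j : {j // ¬ j ∈ B}, Ω j) =>
          ‖(k ∘ (eqB Ω B).symm) q‖ :=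
        ((hkm.comp (eqB Ω B).symm.measurable).norm).stronglyMeasurable
      exact this.integral_prod_left'.aestronglyMeasurable
    rw [habs] at h2
    exact ((mpSnd P B).integrable_comp hm).mp h2
  have hck : Integrable (k ∘ (eqB Ω B).symm)
      ((Measure.pi fun j : {j // j ∈ B} => P j).prod
        (Measure.pi fun j : {j // ¬ j ∈ B} => P j)) :=
    (integrable_prod_iff' hkaesm).mpr ⟨hii, hMabs⟩
  exact (((mpB P B).symm (eqB Ω B)).integrable_comp hkm.aestronglyMeasurable).mp hck

lemma marg_union (B C : Finset (Fin n)) (hBC : Disjoint B C) {k : (∀ i, Ω i) → ℝ}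
    (hk : Integrable k (Measure.pi P)) (hkm : Measurable k) :
    marg P (B ∪ C) k =ᵐ[Measure.pi P] fun x => marg P B (marg P C k) x := by
  filter_upwards [fiber_integrable P (B ∪ C) hk] with x hx
  have mpu := measurePreserving_piFinsetUnion hBC P
  have mpu' : MeasurePreserving (MeasurableEquiv.piFinsetUnion Ω hBC)
      ((Measure.pi fun j : {j // j ∈ B} => P j).prod
        (Measure.pi fun j : {j // j ∈ C} => P j))
      (Measure.pi fun j : {j // j ∈ B ∪ C} => P j) := by
    refine ⟨(MeasurableEquiv.piFinsetUnion Ω hBC).measurable, mpu.map_eq.trans ?_⟩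
    exact pi_inst_irrel _ _ _
  have h1 : marg P (B ∪ C) k x
      = ∫ q, k (Function.updateFinset x (B ∪ C) ((MeasurableEquiv.piFinsetUnion Ω hBC) q))
          ∂((Measure.pi fun j : {j // j ∈ B} => P j).prod
            (Measure.pi fun j : {j // j ∈ C} => P j)) :=
    (mpu'.integral_comp' fun w => k (Function.updateFinset x (B ∪ C) w)).symm
  have hint : Integrable
      (fun q => k (Function.updateFinset x (B ∪ C) ((MeasurableEquiv.piFinsetUnion Ω hBC) q)))
      ((Measure.pi fun j : {j // j ∈ B} => P j).prod
        (Measure.pi fun j : {j // j ∈ C} => P j)) := by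
    have := (mpu'.integrable_comp (g := fun w => k (Function.updateFinset x (B ∪ C) w))
      ?_).mpr hx
    · exact this
    · exact (hkm.comp measurable_updateFinset).aestronglyMeasurable
  rw [h1, integral_prod _ hint]
  unfold marg
  congr 1
  funext y
  congr 1
  funext z
  rw [Function.updateFinset_updateFinset hBC]
  rfl

lemma marg_univ {k : (∀ i, Ω i) → ℝ} (hk : Integrable k (Measure.pi P))
    (x : ∀ i, Ω i) :
    marg P Finset.univ k x = ∫ z, k z ∂(Measure.pi P) := by
  haveI : IsEmpty {j : Fin n // ¬ j ∈ (Finset.univ : Finset (Fin n))} :=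
    ⟨fun j => j.2 (Finset.mem_univ j.1)⟩
  have hc : Integrable (k ∘ (eqB Ω Finset.univ).symm)
      ((Measure.pi fun j : {j // j ∈ (Finset.univ : Finset (Fin n))} => P j).prod
        (Measure.pi fun j : {j // ¬ j ∈ (Finset.univ : Finset (Fin n))} => P j)) :=
    (((mpB P Finset.univ).symm (eqB Ω Finset.univ)).integrable_comp
      hk.aestronglyMeasurable).mpr hk
  rw [marg_eq, ← ((mpB P Finset.univ).symm (eqB Ω Finset.univ)).integral_comp
    (eqB Ω Finset.univ).symm.measurableEmbedding k,
    integral_prod (fun z => k ((eqB Ω Finset.univ).symm z)) hc]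
  refine integral_congr_ae (Filter.Eventually.of_forall fun y => ?_)
  show k ((eqB Ω Finset.univ).symm (y, (eqB Ω Finset.univ x).2))
      = ∫ w, k ((eqB Ω Finset.univ).symm (y, w))
          ∂(Measure.pi fun j : {j : Fin n // ¬ j ∈ (Finset.univ : Finset (Fin n))} => P j)
  have hconst : (fun w : (∀ j : {j : Fin n // ¬ j ∈ (Finset.univ : Finset (Fin n))}, Ω j) =>
      k ((eqB Ω Finset.univ).symm (y, w)))
      = fun _ => k ((eqB Ω Finset.univ).symm (y, (eqB Ω Finset.univ x).2)) := by
    funext w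
    rw [Subsingleton.elim w ((eqB Ω Finset.univ x).2)]
  rw [hconst, integral_const, probReal_univ]
  simp

lemma marg_nonneg {B : Finset (Fin n)} {k : (∀ i, Ω i) → ℝ} (hk : ∀ z, 0 ≤ k z)
    (x : ∀ i, Ω i) : 0 ≤ marg P B k x :=
  integral_nonneg fun _ => hk _

lemma marg_indep {B : Finset (Fin n)} (k : (∀ i, Ω i) → ℝ) (x : ∀ i, Ω i)
    (y : ∀ j : {j // j ∈ B}, Ω j) :
    marg P B k (Function.updateFinset x B y) = marg P B k x := by
  unfold marg
  congr 1
  ext z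
  rw [updateFinset_updateFinset_same]

lemma marg_mul_left {B : Finset (Fin n)} (k ψ : (∀ i, Ω i) → ℝ)
    (hψ : ∀ x y, ψ (Function.updateFinset x B y) = ψ x) (x : ∀ i, Ω i) :
    marg P B (fun z => ψ z * k z) x = ψ x * marg P B k x := by
  unfold marg
  simp_rw [hψ]
  exact integral_const_mul _ _

lemma measurable_marg {B : Finset (Fin n)} {k : (∀ i, Ω i) → ℝ} (hk : Measurable k) :
    Measurable (marg P B k) := by
  have h : StronglyMeasurable fun q : (∀ i, Ω i) × (∀ j : {j // j ∈ B}, Ω j) =>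
      k (Function.updateFinset q.1 B q.2) :=
    (hk.comp measurable_updateFinset_jointly).stronglyMeasurable
  exact h.integral_prod_right'.measurable

lemma marg_empty (k : (∀ i, Ω i) → ℝ) (x : ∀ i, Ω i) : marg P ∅ k x = k x := by
  unfold marg
  simp [Function.updateFinset_empty]

/-- pointwise lower bound for `t log t`. -/
lemma neg_inv_exp_le_mul_log {t : ℝ} (ht : 0 ≤ t) :
    -(Real.exp 1)⁻¹ ≤ t * Real.log t := by
  rcases eq_or_lt_of_le ht with h | h
  · simp [← h]
    positivity
  · have hlog : Real.log t⁻¹ ≤ t⁻¹ * (Real.exp 1)⁻¹ := by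
      have h1 : Real.log (t⁻¹ * (Real.exp 1)⁻¹) ≤ t⁻¹ * (Real.exp 1)⁻¹ - 1 :=
        Real.log_le_sub_one_of_pos (by positivity)
      have h2 : Real.log (t⁻¹ * (Real.exp 1)⁻¹)
          = Real.log t⁻¹ - 1 := by
        rw [Real.log_mul (by positivity) (by positivity), Real.log_inv (Real.exp 1),
          Real.log_exp]
        ring
      linarith
    have : t * Real.log t = -(t * Real.log t⁻¹) := by
      rw [Real.log_inv]; ring
    rw [this]
    have h3 : t * Real.log t⁻¹ ≤ t * (t⁻¹ * (Real.exp 1)⁻¹) :=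
      mul_le_mul_of_nonneg_left hlog ht
    have h4 : t * (t⁻¹ * (Real.exp 1)⁻¹) = (Real.exp 1)⁻¹ := by
      field_simp
    linarith

lemma marg_jensen (B : Finset (Fin n)) {k : (∀ i, Ω i) → ℝ} (hkm : Measurable k)
    (hk0 : ∀ z, 0 ≤ k z) (hk : Integrable k (Measure.pi P))
    (huk : Integrable (fun z => k z * Real.log (k z)) (Measure.pi P)) :
    ∀ᵐ x ∂(Measure.pi P),
      marg P B k x * Real.log (marg P B k x)
        ≤ marg P B (fun z => k z * Real.log (k z)) x := by
  filter_upwards [fiber_integrable P B hk, fiber_integrable P B huk] with x h1 h2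
  have := ConvexOn.map_integral_le (μ := Measure.pi fun j : {j // j ∈ B} => P j)
    (f := fun y => k (Function.updateFinset x B y))
    Real.convexOn_mul_log Real.continuous_mul_log.continuousOn isClosed_Ici
    (Filter.Eventually.of_forall fun y => hk0 _) h1 h2
  simpa only [marg] using this

lemma integrable_marg_mul_log (B : Finset (Fin n)) {k : (∀ i, Ω i) → ℝ}
    (hkm : Measurable k) (hk0 : ∀ z, 0 ≤ k z) (hk : Integrable k (Measure.pi P))
    (huk : Integrable (fun z => k z * Real.log (k z)) (Measure.pi P)) :
    Integrable (fun x => marg P B k x * Real.log (marg P B k x)) (Measure.pi P) := by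
  have hmm : Measurable fun x => marg P B k x * Real.log (marg P B k x) :=
    Real.continuous_mul_log.measurable.comp (measurable_marg P hkm)
  refine Integrable.mono' (g := fun x =>
    (Real.exp 1)⁻¹ + |marg P B (fun z => k z * Real.log (k z)) x|)
    ((integrable_const _).add (integrable_marg P B huk).abs)
    hmm.aestronglyMeasurable ?_
  filter_upwards [marg_jensen P B hkm hk0 hk huk] with x hx
  rw [Real.norm_eq_abs, abs_le]
  constructor
  · have := neg_inv_exp_le_mul_log (marg_nonneg P (B := B) hk0 x)
    have h0 : (0:ℝ) ≤ |marg P B (fun z => k z * Real.log (k z)) x| := abs_nonneg _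
    nlinarith [Real.exp_pos 1, inv_pos.mpr (Real.exp_pos 1)]
  · have : marg P B (fun z => k z * Real.log (k z)) x
        ≤ |marg P B (fun z => k z * Real.log (k z)) x| := le_abs_self _
    nlinarith [inv_pos.mpr (Real.exp_pos 1)]

lemma marg_eq_zero_ae (B : Finset (Fin n)) {k : (∀ i, Ω i) → ℝ} (hkm : Measurable k)
    (hk0 : ∀ z, 0 ≤ k z) (hk : Integrable k (Measure.pi P)) :
    ∀ᵐ x ∂(Measure.pi P), marg P B k x = 0 → k x = 0 := by
  set ψ : (∀ i, Ω i) → ℝ := fun z => if marg P B k z = 0 then (1:ℝ) else 0 with hψdef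
  have hψm : Measurable ψ := by
    refine Measurable.ite ?_ measurable_const measurable_const
    exact (measurable_marg P hkm) (measurableSet_singleton 0)
  have hψind : ∀ x y, ψ (Function.updateFinset x B y) = ψ x := by
    intro x y
    simp only [hψdef, marg_indep]
  have hint : Integrable (fun z => ψ z * k z) (Measure.pi P) := by
    refine Integrable.mono' hk (hψm.mul hkm).aestronglyMeasurable ?_
    refine Filter.Eventually.of_forall fun z => ?_
    rw [Real.norm_eq_abs, abs_mul]
    by_cases h : marg P B k z = 0 <;>
      simp [hψdef, h, abs_of_nonneg (hk0 z), hk0 z]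
  have hzero : ∀ x, marg P B (fun z => ψ z * k z) x = 0 := by
    intro x
    rw [marg_mul_left P k ψ hψind x]
    by_cases h : marg P B k x = 0 <;> simp [hψdef, h]
  have hI : ∫ z, ψ z * k z ∂(Measure.pi P) = 0 := by
    rw [← integral_marg P B hint]
    simp [hzero]
  have h0 : ∀ z, 0 ≤ ψ z * k z := by
    intro z
    by_cases h : marg P B k z = 0 <;> simp [hψdef, h, hk0 z]
  have := (integral_eq_zero_iff_of_nonneg h0 hint).mp hI
  filter_upwards [this] with z hz h
  simpa [hψdef, h] using hz

lemma updateFinset_comm {B C : Finset (Fin n)} (hBC : Disjoint B C) (x : ∀ i, Ω i)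
    (yB : ∀ j : {j // j ∈ B}, Ω j) (yC : ∀ j : {j // j ∈ C}, Ω j) :
    Function.updateFinset (Function.updateFinset x B yB) C yC
      = Function.updateFinset (Function.updateFinset x C yC) B yB := by
  ext j
  by_cases hB : j ∈ B
  · have hC : j ∉ C := Finset.disjoint_left.mp hBC hB
    simp [Function.updateFinset, hB, hC]
  · by_cases hC : j ∈ C <;> simp [Function.updateFinset, hB, hC]

/-- Pointwise Young-type inequality for the key step. -/
lemma young_pointwise {t a cc qq : ℝ} (ht : 0 ≤ t) (ha : 0 ≤ a) (hcc : 0 ≤ cc)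
    (hqq : 0 ≤ qq) (h1 : a = 0 → t = 0) (h2 : cc = 0 → a = 0) (h3 : qq = 0 → t = 0) :
    t * Real.log a - t * Real.log cc
      ≤ t * Real.log t - t * Real.log qq - t + qq / cc * a := by
  rcases eq_or_lt_of_le ht with h | htpos
  · rw [← h]
    simp only [zero_mul, sub_zero, zero_sub, neg_zero, add_zero, zero_add, sub_self]
    positivity
  · have hapos : 0 < a := by
      rcases eq_or_lt_of_le ha with h' | h'
      · exact absurd (h1 h'.symm) (by linarith)
      · exact h'
    have hccpos : 0 < cc := by
      rcases eq_or_lt_of_le hcc with h' | h'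
      · exact absurd (h2 h'.symm) (by linarith)
      · exact h'
    have hqqpos : 0 < qq := by
      rcases eq_or_lt_of_le hqq with h' | h'
      · exact absurd (h3 h'.symm) (by linarith)
      · exact h'
    set z := a * qq / (t * cc) with hz
    have hzpos : 0 < z := by positivity
    have hlz : Real.log z = Real.log a + Real.log qq - Real.log t - Real.log cc := by
      rw [hz, Real.log_div (by positivity) (by positivity),
        Real.log_mul (by positivity) (by positivity),
        Real.log_mul (by positivity) (by positivity)]
      ring
    have h4 : Real.log z ≤ z - 1 := Real.log_le_sub_one_of_pos hzpos
    have h5 : t * Real.log z ≤ t * (z - 1) :=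
      mul_le_mul_of_nonneg_left h4 (le_of_lt htpos)
    have h6 : t * z = a * qq / cc := by
      rw [hz]
      field_simp
    have h7 : t * Real.log z
        = t * Real.log a + t * Real.log qq - t * Real.log t - t * Real.log cc := by
      rw [hlz]; ring
    have h8 : t * (z - 1) = a * qq / cc - t := by
      rw [mul_sub, h6]; ring
    have h9 : qq / cc * a = a * qq / cc := by ring
    linarith

/-- The quantity `J B = ∫ u (E_B f)` where `u t = t log t`. -/
def J (f : (∀ i, Ω i) → ℝ) (B : Finset (Fin n)) : ℝ :=
  ∫ x, marg P B f x * Real.log (marg P B f x) ∂(Measure.pi P)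

lemma J_mono {f : (∀ i, Ω i) → ℝ} (hfm : Measurable f) (hf0 : ∀ z, 0 ≤ f z)
    (hfint : Integrable f (Measure.pi P))
    (hulog : Integrable (fun z => f z * Real.log (f z)) (Measure.pi P))
    {B B' : Finset (Fin n)} (hBB' : B ⊆ B') : J P f B' ≤ J P f B := by
  set g := marg P B f with hgdef
  have hgm : Measurable g := measurable_marg P hfm
  have hg0 : ∀ z, 0 ≤ g z := fun z => marg_nonneg P (B := B) hf0 z
  have hgint : Integrable g (Measure.pi P) := integrable_marg P B hfint
  have hgu : Integrable (fun z => g z * Real.log (g z)) (Measure.pi P) :=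
    integrable_marg_mul_log P B hfm hf0 hfint hulog
  have e : marg P B' f =ᵐ[Measure.pi P] fun x => marg P (B' \ B) g x := by
    have := marg_union P (B' \ B) B Finset.sdiff_disjoint hfint hfm
    rwa [Finset.sdiff_union_of_subset hBB'] at this
  calc J P f B'
      = ∫ x, (marg P (B' \ B) g x) * Real.log (marg P (B' \ B) g x)
          ∂(Measure.pi P) := by
        refine integral_congr_ae ?_
        filter_upwards [e] with x hx
        rw [hx]
    _ ≤ ∫ x, marg P (B' \ B) (fun z => g z * Real.log (g z)) x ∂(Measure.pi P) :=
        integral_mono_ae (integrable_marg_mul_log P _ hgm hg0 hgint hgu)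
          (integrable_marg P _ hgu) (marg_jensen P _ hgm hg0 hgint hgu)
    _ = ∫ x, g x * Real.log (g x) ∂(Measure.pi P) := integral_marg P _ hgu
    _ = J P f B := rfl

lemma key {f : (∀ i, Ω i) → ℝ} (hfm : Measurable f) (hf0 : ∀ z, 0 ≤ f z)
    (hfint : Integrable f (Measure.pi P))
    (hulog : Integrable (fun z => f z * Real.log (f z)) (Measure.pi P))
    {S S' : Finset (Fin n)} (hSS' : S ⊆ S') {i : Fin n} (hi : i ∉ S') :
    J P f S' - J P f (insert i S') ≤ J P f S - J P f (insert i S) := by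
  have hiS : i ∉ S := fun hm => hi (hSS' hm)
  set T : Finset (Fin n) := S' \ S with hTdef
  have hTS : Disjoint T S := Finset.sdiff_disjoint
  have hTScup : T ∪ S = S' := Finset.sdiff_union_of_subset hSS'
  have hiT : i ∉ T := fun hm => hi (Finset.sdiff_subset hm)
  have hdiS : Disjoint ({i} : Finset (Fin n)) S := Finset.disjoint_singleton_left.mpr hiS
  have hdiS' : Disjoint ({i} : Finset (Fin n)) S' := Finset.disjoint_singleton_left.mpr hi
  have hdiT : Disjoint ({i} : Finset (Fin n)) T := Finset.disjoint_singleton_left.mpr hiT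
  -- the four functions
  set g := marg P S f with hgdef
  have hgm : Measurable g := measurable_marg P hfm
  have hg0 : ∀ z, 0 ≤ g z := fun z => marg_nonneg P (B := S) hf0 z
  have hgint : Integrable g (Measure.pi P) := integrable_marg P S hfint
  have hgu : Integrable (fun z => g z * Real.log (g z)) (Measure.pi P) :=
    integrable_marg_mul_log P S hfm hf0 hfint hulog
  set q := marg P {i} g with hqdef
  have hqm : Measurable q := measurable_marg P hgm
  have hq0 : ∀ z, 0 ≤ q z := fun z => marg_nonneg P (B := {i}) hg0 z
  have hqint : Integrable q (Measure.pi P) := integrable_marg P {i} hgint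
  have hqu : Integrable (fun z => q z * Real.log (q z)) (Measure.pi P) :=
    integrable_marg_mul_log P {i} hgm hg0 hgint hgu
  set hh := marg P T g with hhdef
  have hhm : Measurable hh := measurable_marg P hgm
  have hh0 : ∀ z, 0 ≤ hh z := fun z => marg_nonneg P (B := T) hg0 z
  have hhint : Integrable hh (Measure.pi P) := integrable_marg P T hgint
  have hhu : Integrable (fun z => hh z * Real.log (hh z)) (Measure.pi P) :=
    integrable_marg_mul_log P T hgm hg0 hgint hgu
  set cc := marg P {i} hh with hccdef
  have hccm : Measurable cc := measurable_marg P hhm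
  have hcc0 : ∀ z, 0 ≤ cc z := fun z => marg_nonneg P (B := {i}) hh0 z
  have hccint : Integrable cc (Measure.pi P) := integrable_marg P {i} hhint
  have hccu : Integrable (fun z => cc z * Real.log (cc z)) (Measure.pi P) :=
    integrable_marg_mul_log P {i} hhm hh0 hhint hhu
  -- independence facts
  have hhind : ∀ x y, hh (Function.updateFinset x T y) = hh x := fun x y =>
    marg_indep P g x y
  have hqind : ∀ x y, q (Function.updateFinset x {i} y) = q x := fun x y =>
    marg_indep P g x y
  have hccind_i : ∀ x y, cc (Function.updateFinset x {i} y) = cc x := fun x y =>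
    marg_indep P hh x y
  have hccind_T : ∀ x y, cc (Function.updateFinset x T y) = cc x := by
    intro x y
    show marg P {i} hh (Function.updateFinset x T y) = marg P {i} hh x
    unfold marg
    refine integral_congr_ae (Filter.Eventually.of_forall fun z => ?_)
    show hh (Function.updateFinset (Function.updateFinset x T y) {i} z)
        = hh (Function.updateFinset x {i} z)
    rw [updateFinset_comm hdiT.symm x y z, hhind]
  -- a.e. identifications
  have he1 : marg P (insert i S) f =ᵐ[Measure.pi P] q := by
    have h1 := marg_union P {i} S hdiS hfint hfm
    rw [← Finset.insert_eq] at h1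
    exact h1
  have he2 : marg P S' f =ᵐ[Measure.pi P] hh := by
    have h1 := marg_union P T S hTS hfint hfm
    rwa [hTScup] at h1
  have he3 : marg P (insert i S') f =ᵐ[Measure.pi P] cc := by
    have h1 := marg_union P {i} S' hdiS' hfint hfm
    rw [← Finset.insert_eq] at h1
    have h2 : (fun x => marg P {i} (marg P S' f) x) =ᵐ[Measure.pi P]
        fun x => marg P {i} hh x := marg_congr_ae P {i} he2
    exact h1.trans h2
  -- J rewrites
  have hJS : J P f S = ∫ x, g x * Real.log (g x) ∂(Measure.pi P) := rfl
  have hJiS : J P f (insert i S) = ∫ x, q x * Real.log (q x) ∂(Measure.pi P) := by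
    refine integral_congr_ae ?_
    filter_upwards [he1] with x hx
    rw [hx]
  have hJS' : J P f S' = ∫ x, hh x * Real.log (hh x) ∂(Measure.pi P) := by
    refine integral_congr_ae ?_
    filter_upwards [he2] with x hx
    rw [hx]
  have hJiS' : J P f (insert i S') = ∫ x, cc x * Real.log (cc x) ∂(Measure.pi P) := by
    refine integral_congr_ae ?_
    filter_upwards [he3] with x hx
    rw [hx]
  -- null implications
  have nh : ∀ᵐ x ∂(Measure.pi P), hh x = 0 → g x = 0 :=
    marg_eq_zero_ae P T hgm hg0 hgint
  have ncc : ∀ᵐ x ∂(Measure.pi P), cc x = 0 → hh x = 0 :=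
    marg_eq_zero_ae P {i} hhm hh0 hhint
  have nq : ∀ᵐ x ∂(Measure.pi P), q x = 0 → g x = 0 :=
    marg_eq_zero_ae P {i} hgm hg0 hgint
  -- integrability of the cross terms
  have Ilh : Integrable (fun z => Real.log (hh z) * g z) (Measure.pi P) := by
    refine integrable_of_marg P T hgint hgm (Real.measurable_log.comp hhm)
      (fun x y => by simp only [hhind]) ?_
    have hptw : (fun z => |Real.log (hh z) * g z|)
        = fun z => |Real.log (hh z)| * g z := by
      funext z; rw [abs_mul, abs_of_nonneg (hg0 z)]
    rw [hptw]
    have hml : marg P T (fun z => |Real.log (hh z)| * g z)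
        = fun x => |Real.log (hh x)| * hh x := by
      funext x
      rw [marg_mul_left P g (fun z => |Real.log (hh z)|)
        (fun x y => by simp only [hhind]) x]
    rw [hml]
    have heq : (fun x => |Real.log (hh x)| * hh x)
        = fun x => |hh x * Real.log (hh x)| := by
      funext x; rw [abs_mul, abs_of_nonneg (hh0 x), mul_comm]
    rw [heq]
    exact hhu.abs
  have Ilq : Integrable (fun z => Real.log (q z) * g z) (Measure.pi P) := by
    refine integrable_of_marg P {i} hgint hgm (Real.measurable_log.comp hqm)
      (fun x y => by simp only [hqind]) ?_
    have hptw : (fun z => |Real.log (q z) * g z|)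
        = fun z => |Real.log (q z)| * g z := by
      funext z; rw [abs_mul, abs_of_nonneg (hg0 z)]
    rw [hptw]
    have hml : marg P {i} (fun z => |Real.log (q z)| * g z)
        = fun x => |Real.log (q x)| * q x := by
      funext x
      rw [marg_mul_left P g (fun z => |Real.log (q z)|)
        (fun x y => by simp only [hqind]) x]
    rw [hml]
    have heq : (fun x => |Real.log (q x)| * q x)
        = fun x => |q x * Real.log (q x)| := by
      funext x; rw [abs_mul, abs_of_nonneg (hq0 x), mul_comm]
    rw [heq]
    exact hqu.abs
  have Ilcc_h : Integrable (fun z => Real.log (cc z) * hh z) (Measure.pi P) := by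
    refine integrable_of_marg P {i} hhint hhm (Real.measurable_log.comp hccm)
      (fun x y => by simp only [hccind_i]) ?_
    have hptw : (fun z => |Real.log (cc z) * hh z|)
        = fun z => |Real.log (cc z)| * hh z := by
      funext z; rw [abs_mul, abs_of_nonneg (hh0 z)]
    rw [hptw]
    have hml : marg P {i} (fun z => |Real.log (cc z)| * hh z)
        = fun x => |Real.log (cc x)| * cc x := by
      funext x
      rw [marg_mul_left P hh (fun z => |Real.log (cc z)|)
        (fun x y => by simp only [hccind_i]) x]
    rw [hml]
    have heq : (fun x => |Real.log (cc x)| * cc x)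
        = fun x => |cc x * Real.log (cc x)| := by
      funext x; rw [abs_mul, abs_of_nonneg (hcc0 x), mul_comm]
    rw [heq]
    exact hccu.abs
  have Ilcc_g : Integrable (fun z => Real.log (cc z) * g z) (Measure.pi P) := by
    refine integrable_of_marg P T hgint hgm (Real.measurable_log.comp hccm)
      (fun x y => by simp only [hccind_T]) ?_
    have hptw : (fun z => |Real.log (cc z) * g z|)
        = fun z => |Real.log (cc z)| * g z := by
      funext z; rw [abs_mul, abs_of_nonneg (hg0 z)]
    rw [hptw]
    have hml : marg P T (fun z => |Real.log (cc z)| * g z)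
        = fun x => |Real.log (cc x)| * hh x := by
      funext x
      rw [marg_mul_left P g (fun z => |Real.log (cc z)|)
        (fun x y => by simp only [hccind_T]) x]
    rw [hml]
    have heq : (fun x => |Real.log (cc x)| * hh x)
        = fun x => |Real.log (cc x) * hh x| := by
      funext x; rw [abs_mul, abs_of_nonneg (hh0 x)]
    rw [heq]
    exact Ilcc_h.abs
  have Irr : Integrable (fun x => q x / cc x * cc x) (Measure.pi P) := by
    refine Integrable.mono' hqint ((hqm.div hccm).mul hccm).aestronglyMeasurable ?_
    refine Filter.Eventually.of_forall fun x => ?_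
    rw [Real.norm_eq_abs,
      abs_of_nonneg (mul_nonneg (div_nonneg (hq0 x) (hcc0 x)) (hcc0 x))]
    by_cases hcx : cc x = 0
    · simp [hcx, hq0 x]
    · rw [div_mul_cancel₀ _ hcx]
  have Iqch : Integrable (fun z => q z / cc z * hh z) (Measure.pi P) := by
    refine integrable_of_marg P {i} hhint hhm (hqm.div hccm)
      (fun x y => by simp only [hqind, hccind_i]) ?_
    have hptw : (fun z => |q z / cc z * hh z|) = fun z => q z / cc z * hh z := by
      funext z
      rw [abs_of_nonneg (mul_nonneg (div_nonneg (hq0 z) (hcc0 z)) (hh0 z))]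
    rw [hptw]
    have hml : marg P {i} (fun z => q z / cc z * hh z)
        = fun x => q x / cc x * cc x := by
      funext x
      rw [marg_mul_left P hh (fun z => q z / cc z)
        (fun x y => by simp only [hqind, hccind_i]) x]
    rw [hml]
    exact Irr
  -- commuted versions
  have comm_g_hh : (fun z => Real.log (hh z) * g z) = fun z => g z * Real.log (hh z) :=
    funext fun z => mul_comm _ _
  have comm_g_q : (fun z => Real.log (q z) * g z) = fun z => g z * Real.log (q z) :=
    funext fun z => mul_comm _ _
  have comm_g_cc : (fun z => Real.log (cc z) * g z) = fun z => g z * Real.log (cc z) :=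
    funext fun z => mul_comm _ _
  have Ilh' : Integrable (fun z => g z * Real.log (hh z)) (Measure.pi P) :=
    comm_g_hh ▸ Ilh
  have Ilq' : Integrable (fun z => g z * Real.log (q z)) (Measure.pi P) :=
    comm_g_q ▸ Ilq
  have Ilcc_g' : Integrable (fun z => g z * Real.log (cc z)) (Measure.pi P) :=
    comm_g_cc ▸ Ilcc_g
  -- tower identities
  have tlh : ∫ z, g z * Real.log (hh z) ∂(Measure.pi P)
      = ∫ z, hh z * Real.log (hh z) ∂(Measure.pi P) := by
    rw [← comm_g_hh, ← integral_marg P T Ilh]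
    refine integral_congr_ae (Filter.Eventually.of_forall fun x => ?_)
    rw [marg_mul_left P g (fun z => Real.log (hh z))
      (fun x y => by simp only [hhind]) x]
    exact mul_comm _ _
  have tlq : ∫ z, g z * Real.log (q z) ∂(Measure.pi P)
      = ∫ z, q z * Real.log (q z) ∂(Measure.pi P) := by
    rw [← comm_g_q, ← integral_marg P {i} Ilq]
    refine integral_congr_ae (Filter.Eventually.of_forall fun x => ?_)
    rw [marg_mul_left P g (fun z => Real.log (q z))
      (fun x y => by simp only [hqind]) x]
    exact mul_comm _ _
  have tlcc1 : ∫ z, Real.log (cc z) * g z ∂(Measure.pi P)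
      = ∫ z, Real.log (cc z) * hh z ∂(Measure.pi P) := by
    rw [← integral_marg P T Ilcc_g]
    refine integral_congr_ae (Filter.Eventually.of_forall fun x => ?_)
    rw [marg_mul_left P g (fun z => Real.log (cc z))
      (fun x y => by simp only [hccind_T]) x]
  have tlcc2 : ∫ z, Real.log (cc z) * hh z ∂(Measure.pi P)
      = ∫ z, cc z * Real.log (cc z) ∂(Measure.pi P) := by
    rw [← integral_marg P {i} Ilcc_h]
    refine integral_congr_ae (Filter.Eventually.of_forall fun x => ?_)
    rw [marg_mul_left P hh (fun z => Real.log (cc z))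
      (fun x y => by simp only [hccind_i]) x]
    exact mul_comm _ _
  have tlcc : ∫ z, g z * Real.log (cc z) ∂(Measure.pi P)
      = ∫ z, cc z * Real.log (cc z) ∂(Measure.pi P) := by
    rw [← comm_g_cc]
    exact tlcc1.trans tlcc2
  have tqch : ∫ z, q z / cc z * hh z ∂(Measure.pi P)
      ≤ ∫ x, g x ∂(Measure.pi P) := by
    rw [← integral_marg P {i} Iqch]
    have hml : marg P {i} (fun z => q z / cc z * hh z)
        = fun x => q x / cc x * cc x := by
      funext x
      rw [marg_mul_left P hh (fun z => q z / cc z)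
        (fun x y => by simp only [hqind, hccind_i]) x]
    rw [hml]
    have hle : ∀ x, q x / cc x * cc x ≤ q x := by
      intro x
      by_cases hcx : cc x = 0
      · simp [hcx, hq0 x]
      · rw [div_mul_cancel₀ _ hcx]
    calc ∫ x, q x / cc x * cc x ∂(Measure.pi P)
        ≤ ∫ x, q x ∂(Measure.pi P) := integral_mono Irr hqint hle
      _ = ∫ x, g x ∂(Measure.pi P) := integral_marg P {i} hgint
  -- main a.e. inequality and conclusion
  have I1 : Integrable (fun x => g x * Real.log (g x) - g x * Real.log (q x))
      (Measure.pi P) := hgu.sub Ilq'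
  have I2 : Integrable (fun x => g x * Real.log (g x) - g x * Real.log (q x) - g x)
      (Measure.pi P) := I1.sub hgint
  have hmain : ∫ x, (g x * Real.log (hh x) - g x * Real.log (cc x)) ∂(Measure.pi P)
      ≤ ∫ x, (g x * Real.log (g x) - g x * Real.log (q x) - g x
          + q x / cc x * hh x) ∂(Measure.pi P) := by
    refine integral_mono_ae (Ilh'.sub Ilcc_g') (I2.add Iqch) ?_
    filter_upwards [nh, ncc, nq] with x h1 h2 h3
    exact young_pointwise (hg0 x) (hh0 x) (hcc0 x) (hq0 x) h1 h2 h3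
  rw [integral_sub Ilh' Ilcc_g', integral_add I2 Iqch, integral_sub I1 hgint,
    integral_sub hgu Ilq'] at hmain
  rw [hJS, hJiS, hJS', hJiS']
  linarith

lemma coordSigma_le (A : Finset (Fin n)) :
    coordSigma Ω A ≤ (MeasurableSpace.pi : MeasurableSpace (∀ i, Ω i)) := by
  refine iSup₂_le fun i _ => ?_
  exact (measurable_pi_apply i).comap_le

lemma coordSigma_eq (A : Finset (Fin n)) :
    coordSigma Ω A
      = MeasurableSpace.comap (fun x => (eqB Ω A x).2)
          (MeasurableSpace.pi :
            MeasurableSpace (∀ j : {j // ¬ j ∈ A}, Ω j)) := by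
  refine le_antisymm ?_ ?_
  · refine iSup₂_le fun i hi => ?_
    have hi' : ¬ i ∈ A := by
      simp only [Finset.mem_sdiff, Finset.mem_univ, true_and] at hi
      exact hi
    have hcomp : (fun x : ∀ i, Ω i => x i)
        = (fun w : ∀ j : {j // ¬ j ∈ A}, Ω j => w ⟨i, hi'⟩)
          ∘ (fun x => (eqB Ω A x).2) := rfl
    rw [hcomp, ← MeasurableSpace.comap_comp]
    exact MeasurableSpace.comap_mono (measurable_pi_apply (⟨i, hi'⟩ :
      {j // ¬ j ∈ A})).comap_le
  · show MeasurableSpace.comap (fun x => (eqB Ω A x).2)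
        (⨆ j : {j // ¬ j ∈ A}, MeasurableSpace.comap (fun w => w j) inferInstance)
        ≤ coordSigma Ω A
    rw [MeasurableSpace.comap_iSup]
    refine iSup_le fun j => ?_
    rw [MeasurableSpace.comap_comp]
    have : ((fun w : ∀ j' : {j' // ¬ j' ∈ A}, Ω j' => w j)
        ∘ (fun x => (eqB Ω A x).2)) = fun x : ∀ i, Ω i => x j := rfl
    rw [this]
    have hmem : (j : Fin n) ∈ (Finset.univ : Finset (Fin n)) \ A := by
      simp only [Finset.mem_sdiff, Finset.mem_univ, true_and]
      exact j.2
    exact le_iSup₂ (f := fun (i : Fin n) (_ : i ∈ (Finset.univ : Finset (Fin n)) \ A) =>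
      MeasurableSpace.comap (fun x : ∀ i, Ω i => x i) inferInstance) (j : Fin n) hmem

lemma condexp_eq_marg (A : Finset (Fin n)) {k : (∀ i, Ω i) → ℝ}
    (hkm : Measurable k) (hk : Integrable k (Measure.pi P)) :
    MeasureTheory.condExp (coordSigma Ω A) (Measure.pi P) k
      =ᵐ[Measure.pi P] marg P A k := by
  have hm : coordSigma Ω A ≤ (MeasurableSpace.pi : MeasurableSpace (∀ i, Ω i)) :=
    coordSigma_le A
  haveI : IsFiniteMeasure ((Measure.pi P).trim hm) := isFiniteMeasure_trim hm
  set M : (∀ j : {j // ¬ j ∈ A}, Ω j) → ℝ :=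
    fun w => ∫ y, (k ∘ (eqB Ω A).symm) (y, w)
      ∂(Measure.pi fun j : {j // j ∈ A} => P j) with hMdef
  have hc : Integrable (k ∘ (eqB Ω A).symm)
      ((Measure.pi fun j : {j // j ∈ A} => P j).prod
        (Measure.pi fun j : {j // ¬ j ∈ A} => P j)) :=
    (((mpB P A).symm (eqB Ω A)).integrable_comp hk.aestronglyMeasurable).mpr hk
  have hMint : Integrable M (Measure.pi fun j : {j // ¬ j ∈ A} => P j) :=
    hc.integral_prod_right
  have hMsm : StronglyMeasurable M :=
    StronglyMeasurable.integral_prod_left'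
      (hkm.comp (eqB Ω A).symm.measurable).stronglyMeasurable
  have hmargc : marg P A k = M ∘ (fun x => (eqB Ω A x).2) :=
    funext fun x => marg_eq P A k x
  refine (ae_eq_condExp_of_forall_setIntegral_eq hm hk ?_ ?_ ?_).symm
  · exact fun s _ _ => (integrable_marg P A hk).integrableOn
  · intro s hs _
    rw [coordSigma_eq] at hs
    obtain ⟨t, ht, rfl⟩ := hs
    have hset : ((fun x => (eqB Ω A x).2) ⁻¹' t)
        = (eqB Ω A) ⁻¹' (Prod.snd ⁻¹' t) := rfl
    rw [hset]
    have hL := (mpB P A).setIntegral_preimage_emb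
      (eqB Ω A).measurableEmbedding (fun z => M z.2) (Prod.snd ⁻¹' t)
    have hR := (mpB P A).setIntegral_preimage_emb
      (eqB Ω A).measurableEmbedding (fun z => k ((eqB Ω A).symm z)) (Prod.snd ⁻¹' t)
    have hLpreim : ∫ x in (eqB Ω A) ⁻¹' (Prod.snd ⁻¹' t), marg P A k x ∂(Measure.pi P)
        = ∫ x in (eqB Ω A) ⁻¹' (Prod.snd ⁻¹' t), M ((eqB Ω A) x).2 ∂(Measure.pi P) := by
      rw [hmargc]; rfl
    have hRpreim : ∫ x in (eqB Ω A) ⁻¹' (Prod.snd ⁻¹' t), k x ∂(Measure.pi P)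
        = ∫ x in (eqB Ω A) ⁻¹' (Prod.snd ⁻¹' t),
            k ((eqB Ω A).symm ((eqB Ω A) x)) ∂(Measure.pi P) := by
      refine integral_congr_ae (Filter.Eventually.of_forall fun x => ?_)
      simp
    rw [hLpreim, hRpreim, hL, hR]
    -- Fubini on the restricted product measure
    have hset2 : (Prod.snd ⁻¹' t : Set ((∀ j : {j // j ∈ A}, Ω j)
        × (∀ j : {j // ¬ j ∈ A}, Ω j))) = Set.univ ×ˢ t := by
      ext z; simp [Set.mem_prod]
    rw [hset2]
    rw [← Measure.prod_restrict, Measure.restrict_univ]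
    have hc' : Integrable (fun z => k ((eqB Ω A).symm z))
        ((Measure.pi fun j : {j // j ∈ A} => P j).prod
          ((Measure.pi fun j : {j // ¬ j ∈ A} => P j).restrict t)) := by
      have := hc.restrict (s := Set.univ ×ˢ t)
      rwa [← Measure.prod_restrict, Measure.restrict_univ] at this
    have hM' : Integrable (fun z : (∀ j : {j // j ∈ A}, Ω j)
        × (∀ j : {j // ¬ j ∈ A}, Ω j) => M z.2)
        ((Measure.pi fun j : {j // j ∈ A} => P j).prod
          ((Measure.pi fun j : {j // ¬ j ∈ A} => P j).restrict t)) := by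
      have hmap : Measure.map Prod.snd
          ((Measure.pi fun j : {j // j ∈ A} => P j).prod
            ((Measure.pi fun j : {j // ¬ j ∈ A} => P j).restrict t))
          = (Measure.pi fun j : {j // ¬ j ∈ A} => P j).restrict t := by
        rw [Measure.map_snd_prod, measure_univ, one_smul]
      have hMr : Integrable M
          ((Measure.pi fun j : {j // ¬ j ∈ A} => P j).restrict t) :=
        hMint.restrict
      have := (integrable_map_measure (f := Prod.snd) (g := M)
        (by rw [hmap]; exact hMr.aestronglyMeasurable)
        measurable_snd.aemeasurable)
      rw [hmap] at this
      exact this.mp hMr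
    rw [integral_prod_symm _ hM', integral_prod_symm _ hc']
    refine integral_congr_ae (Filter.Eventually.of_forall fun w => ?_)
    show (∫ _ : (∀ j : {j // j ∈ A}, Ω j), M w
        ∂(Measure.pi fun j : {j // j ∈ A} => P j))
      = ∫ y, k ((eqB Ω A).symm (y, w)) ∂(Measure.pi fun j : {j // j ∈ A} => P j)
    rw [integral_const, probReal_univ]
    simp [hMdef]
  · refine StronglyMeasurable.aestronglyMeasurable ?_
    have hmeas : Measurable[coordSigma Ω A] (marg P A k) := by
      rw [coordSigma_eq, hmargc]
      exact hMsm.measurable.comp (Measurable.of_comap_le le_rfl)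
    exact hmeas.stronglyMeasurable

lemma tele {f : (∀ i, Ω i) → ℝ} (hfm : Measurable f) (hf0 : ∀ z, 0 ≤ f z)
    (hfint : Integrable f (Measure.pi P))
    (hulog : Integrable (fun z => f z * Real.log (f z)) (Measure.pi P))
    (A : Finset (Fin n)) :
    ∑ i ∈ A, (J P f (Finset.Iio i) - J P f (Finset.Iic i))
      ≤ J P f ∅ - J P f A := by
  induction A using Finset.induction_on_max with
  | empty => simp
  | insert a s hmax IH =>
    have has : a ∉ s := fun h => lt_irrefl a (hmax a h)
    rw [Finset.sum_insert has]
    have hkey := key P hfm hf0 hfint hulog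
      (show s ⊆ Finset.Iio a from fun x hx => Finset.mem_Iio.mpr (hmax x hx))
      (show a ∉ Finset.Iio a by simp)
    rw [Finset.Iio_insert] at hkey
    linarith

lemma sum_d {f : (∀ i, Ω i) → ℝ} (hfint : Integrable f (Measure.pi P)) :
    ∑ i : Fin n, (J P f (Finset.Iio i) - J P f (Finset.Iic i))
      = J P f ∅ - J P f Finset.univ := by
  set φ : ℕ → ℝ := fun m => J P f (Finset.univ.filter fun j : Fin n => (j : ℕ) < m)
    with hφdef
  have hd : ∀ i : Fin n,
      J P f (Finset.Iio i) - J P f (Finset.Iic i) = φ i - φ (i + 1) := by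
    intro i
    have h1 : Finset.Iio i = Finset.univ.filter fun j : Fin n => (j : ℕ) < (i : ℕ) := by
      ext j
      rw [Finset.mem_Iio, Finset.mem_filter]
      exact ⟨fun h => ⟨Finset.mem_univ _, h⟩, fun h => h.2⟩
    have h2 : Finset.Iic i
        = Finset.univ.filter fun j : Fin n => (j : ℕ) < (i : ℕ) + 1 := by
      ext j
      rw [Finset.mem_Iic, Finset.mem_filter]
      exact ⟨fun h => ⟨Finset.mem_univ _, Nat.lt_succ_iff.mpr h⟩,
        fun h => Nat.lt_succ_iff.mp h.2⟩
    rw [h1, h2]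
  calc ∑ i : Fin n, (J P f (Finset.Iio i) - J P f (Finset.Iic i))
      = ∑ i : Fin n, (φ i - φ (i + 1)) := Finset.sum_congr rfl fun i _ => hd i
    _ = ∑ m ∈ Finset.range n, (φ m - φ (m + 1)) :=
        Fin.sum_univ_eq_sum_range (fun m => φ m - φ (m + 1)) n
    _ = φ 0 - φ n := Finset.sum_range_sub' φ n
    _ = J P f ∅ - J P f Finset.univ := by
        have h0 : (Finset.univ.filter fun j : Fin n => (j : ℕ) < 0) = ∅ := by
          ext j; simp
        have hn' : (Finset.univ.filter fun j : Fin n => (j : ℕ) < n) = Finset.univ := by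
          ext j; simp [j.isLt]
        rw [hφdef]
        simp only [h0, hn']

end ShearerProof

end

/-- Shearer's inequality on a product probability space: for nonnegative weights
`(θ_A)` summing to `1` and any nonnegative `f ∈ L log L`,
`θ⋆ Ent(f) ≤ ∑_A θ_A E[Ent_A(f)]` with `θ⋆ = min_i ∑_{A ∋ i} θ_A`. -/
theorem stmt_6 {n : ℕ} (hn : 0 < n) (Ω : Fin n → Type*) [∀ i, MeasurableSpace (Ω i)]
    (P : ∀ i, Measure (Ω i)) [∀ i, IsProbabilityMeasure (P i)]
    (θ : Finset (Fin n) → ℝ) (hθ0 : ∀ A, 0 ≤ θ A) (hθ1 : ∑ A, θ A = 1)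
    (f : (∀ i, Ω i) → ℝ) (hf : Measurable f) (hf0 : ∀ x, 0 ≤ f x)
    (hfint : Integrable f (Measure.pi P))
    (hflog : Integrable (fun x => |f x * Real.log (f x)|) (Measure.pi P)) :
    (⨅ i : Fin n, ∑ A ∈ Finset.univ.filter (fun A => i ∈ A), θ A) * ent (Measure.pi P) f
      ≤ ∑ A : Finset (Fin n), θ A * ∫ x, condEnt (Measure.pi P) A f x ∂(Measure.pi P) := by
  classical
  haveI : Nonempty (Fin n) := ⟨⟨0, hn⟩⟩
  have hulog : Integrable (fun z => f z * Real.log (f z)) (Measure.pi P) := by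
    refine Integrable.mono' hflog
      (hf.mul (Real.measurable_log.comp hf)).aestronglyMeasurable
      (Filter.Eventually.of_forall fun z => ?_)
    rw [Real.norm_eq_abs]
  set d : Fin n → ℝ := fun i =>
    ShearerProof.J P f (Finset.Iio i) - ShearerProof.J P f (Finset.Iic i) with hd
  have hd0 : ∀ i, 0 ≤ d i := fun i => sub_nonneg.mpr
    (ShearerProof.J_mono P hf hf0 hfint hulog Finset.Iio_subset_Iic_self)
  set w : Fin n → ℝ := fun i => ∑ A ∈ Finset.univ.filter (fun A => i ∈ A), θ A with hw
  have hinf_le : ∀ i, (⨅ i : Fin n, w i) ≤ w i := fun i =>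
    ciInf_le (Finite.bddBelow_range w) i
  have hJempty : ShearerProof.J P f ∅ = ∫ x, f x * Real.log (f x) ∂(Measure.pi P) := by
    refine integral_congr_ae (Filter.Eventually.of_forall fun x => ?_)
    show ShearerProof.marg P ∅ f x * Real.log (ShearerProof.marg P ∅ f x)
        = f x * Real.log (f x)
    rw [ShearerProof.marg_empty]
  have hJuniv : ShearerProof.J P f Finset.univ
      = (∫ x, f x ∂(Measure.pi P)) * Real.log (∫ x, f x ∂(Measure.pi P)) := by
    have h1 : ShearerProof.J P f Finset.univ
        = ∫ _x, (∫ x, f x ∂(Measure.pi P)) * Real.log (∫ x, f x ∂(Measure.pi P))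
            ∂(Measure.pi P) := by
      refine integral_congr_ae (Filter.Eventually.of_forall fun x => ?_)
      show ShearerProof.marg P Finset.univ f x
          * Real.log (ShearerProof.marg P Finset.univ f x) = _
      rw [ShearerProof.marg_univ P hfint]
    rw [h1, integral_const, probReal_univ]
    simp
  have hent : ent (Measure.pi P) f
      = ShearerProof.J P f ∅ - ShearerProof.J P f Finset.univ := by
    unfold ent
    rw [hJempty, hJuniv]
  have hcond : ∀ A : Finset (Fin n),
      ∫ x, condEnt (Measure.pi P) A f x ∂(Measure.pi P)
        = ShearerProof.J P f ∅ - ShearerProof.J P f A := by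
    intro A
    have hm := ShearerProof.coordSigma_le (Ω := Ω) A
    haveI : IsFiniteMeasure ((Measure.pi P).trim hm) := isFiniteMeasure_trim hm
    have hid := ShearerProof.condexp_eq_marg P A hf hfint
    have hIu : Integrable (fun x => ShearerProof.marg P A f x
        * Real.log (ShearerProof.marg P A f x)) (Measure.pi P) :=
      ShearerProof.integrable_marg_mul_log P A hf hf0 hfint hulog
    have hI2 : Integrable (fun x =>
        (MeasureTheory.condExp (coordSigma Ω A) (Measure.pi P) f) x
          * Real.log ((MeasureTheory.condExp (coordSigma Ω A) (Measure.pi P) f) x))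
        (Measure.pi P) := by
      refine hIu.congr ?_
      filter_upwards [hid] with x hx
      rw [hx]
    have hsplit : ∫ x, condEnt (Measure.pi P) A f x ∂(Measure.pi P)
        = (∫ x, (MeasureTheory.condExp (coordSigma Ω A) (Measure.pi P)
            (fun y => f y * Real.log (f y))) x ∂(Measure.pi P))
          - ∫ x, (MeasureTheory.condExp (coordSigma Ω A) (Measure.pi P) f) x
              * Real.log ((MeasureTheory.condExp (coordSigma Ω A) (Measure.pi P) f) x)
                ∂(Measure.pi P) := by
      unfold condEnt
      exact integral_sub integrable_condExp hI2
    have hterm1 : ∫ x, (MeasureTheory.condExp (coordSigma Ω A) (Measure.pi P)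
        (fun y => f y * Real.log (f y))) x ∂(Measure.pi P)
        = ∫ x, f x * Real.log (f x) ∂(Measure.pi P) := integral_condExp hm
    have hterm2 : ∫ x, (MeasureTheory.condExp (coordSigma Ω A) (Measure.pi P) f) x
        * Real.log ((MeasureTheory.condExp (coordSigma Ω A) (Measure.pi P) f) x)
          ∂(Measure.pi P) = ShearerProof.J P f A := by
      refine integral_congr_ae ?_
      filter_upwards [hid] with x hx
      rw [hx]
    rw [hsplit, hterm1, hterm2, hJempty]
  have hRHS : ∑ A : Finset (Fin n), θ A * ∫ x, condEnt (Measure.pi P) A f x ∂(Measure.pi P)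
      = ∑ A : Finset (Fin n), θ A * (ShearerProof.J P f ∅ - ShearerProof.J P f A) :=
    Finset.sum_congr rfl fun A _ => by rw [hcond A]
  have step1 : ∑ A : Finset (Fin n), θ A * (∑ i ∈ A, d i)
      ≤ ∑ A : Finset (Fin n), θ A * (ShearerProof.J P f ∅ - ShearerProof.J P f A) :=
    Finset.sum_le_sum fun A _ => mul_le_mul_of_nonneg_left
      (ShearerProof.tele P hf hf0 hfint hulog A) (hθ0 A)
  have hswap : ∑ A : Finset (Fin n), θ A * (∑ i ∈ A, d i) = ∑ i : Fin n, w i * d i := by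
    calc ∑ A : Finset (Fin n), θ A * ∑ i ∈ A, d i
        = ∑ A : Finset (Fin n), ∑ i ∈ A, θ A * d i := by
          refine Finset.sum_congr rfl fun A _ => ?_
          rw [Finset.mul_sum]
      _ = ∑ A : Finset (Fin n), ∑ i : Fin n, (if i ∈ A then θ A * d i else 0) := by
          refine Finset.sum_congr rfl fun A _ => ?_
          rw [Fintype.sum_ite_mem]
      _ = ∑ i : Fin n, ∑ A : Finset (Fin n), (if i ∈ A then θ A * d i else 0) :=
          Finset.sum_comm
      _ = ∑ i : Fin n, w i * d i := by
          refine Finset.sum_congr rfl fun i _ => ?_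
          show (∑ A : Finset (Fin n), if i ∈ A then θ A * d i else 0)
              = (∑ A ∈ Finset.univ.filter (fun A => i ∈ A), θ A) * d i
          rw [Finset.sum_filter, Finset.sum_mul]
          refine Finset.sum_congr rfl fun A _ => ?_
          split <;> simp
  have step2 : ∑ i : Fin n, (⨅ i : Fin n, w i) * d i ≤ ∑ i : Fin n, w i * d i :=
    Finset.sum_le_sum fun i _ => mul_le_mul_of_nonneg_right (hinf_le i) (hd0 i)
  have hsum : ∑ i : Fin n, d i
      = ShearerProof.J P f ∅ - ShearerProof.J P f Finset.univ :=
    ShearerProof.sum_d P hfint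
  calc (⨅ i : Fin n, w i) * ent (Measure.pi P) f
      = ∑ i : Fin n, (⨅ i : Fin n, w i) * d i := by
        rw [hent, ← hsum, Finset.mul_sum]
    _ ≤ ∑ i : Fin n, w i * d i := step2
    _ = ∑ A : Finset (Fin n), θ A * (∑ i ∈ A, d i) := hswap.symm
    _ ≤ ∑ A : Finset (Fin n), θ A * (ShearerProof.J P f ∅ - ShearerProof.J P f A) := step1
    _ = ∑ A : Finset (Fin n), θ A * ∫ x, condEnt (Measure.pi P) A f x ∂(Measure.pi P) :=
        hRHS.symm
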